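/- For every prime p and positive integer n: the p-adic valuation of the denominator of ζ(1 − 2n) = −B_{2n}/(2n) equals 0 if (p − 1) does not divide 2n, and equals 1 + ν_p(2n) if (p − 1) divides 2n. (Here B_{2n} is the 2n-th Bernoulli number.) -/

import Mathlib

open Finset

lemma binom_aux (a b : ℤ) (m : ℕ) (hm : 1 ≤ m) :
    (b^2 : ℤ) ∣ (a+b)^m - (a^m + m * a^(m-1) * b) := by
  obtain ⟨n, rfl⟩ : ∃ n, m = n + 1 := ⟨m-1, by omega⟩
  rw [add_pow, Finset.sum_range_succ]
  simp only [Nat.add_sub_cancel, Nat.choose_self, Nat.succ_sub_one, pow_zero, mul_one,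
    Nat.cast_one]
  rcases n with _ | n
  · ring_nf; simp
  rw [Finset.sum_range_succ]
  have h1 : ∀ x ∈ range (n+1), a ^ x * b ^ (n + 2 - x) * ((n+2).choose x : ℤ) =
      b^2 * (a ^ x * b ^ (n - x) * ((n+2).choose x : ℤ)) := by
    intro x hx
    simp only [mem_range] at hx
    have : n + 2 - x = (n - x) + 2 := by omega
    rw [this, pow_add]; ring
  rw [Finset.sum_congr rfl h1, ← Finset.mul_sum]
  simp only [Nat.add_sub_cancel_left, Nat.succ_sub_one, Nat.choose_succ_self_right]
  have h2 : n + 1 + 1 - (n + 1 + 1) = 0 := by omega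
  rw [h2]
  convert Dvd.intro (∑ i ∈ range (n + 1), a ^ i * b ^ (n - i) * ((n+2).choose i : ℤ)) rfl using 1
  push_cast
  · rfl
  ring

lemma range_mul_split (f : ℕ → ℤ) (a b : ℕ) :
    ∑ k ∈ range (a*b), f k = ∑ t ∈ range a, ∑ r ∈ range b, f (t*b + r) := by
  induction a with
  | zero => simp
  | succ a ih =>
    rw [Finset.sum_range_succ, ← ih, Nat.succ_mul, Finset.sum_range_add]

def Spow (p m K : ℕ) : ℤ := ∑ k ∈ range (p^K), (k:ℤ)^m

lemma step_lemma (p m K : ℕ) (hp : p.Prime) (hm : 2 ∣ m) (hm1 : 1 ≤ m) (hK : 1 ≤ K) :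
    (p:ℤ)^(K+1) ∣ Spow p m (K+1) - p * Spow p m K := by
  have hsplit : Spow p m (K+1) = ∑ t ∈ range p, ∑ r ∈ range (p^K),
      ((t*p^K + r : ℕ) : ℤ)^m := by
    rw [Spow, pow_succ, mul_comm (p^K) p, range_mul_split]
  set G : ℤ := ∑ t ∈ range p, (t:ℤ) with hG
  set R : ℤ := ∑ r ∈ range (p^K), (r:ℤ)^(m-1) with hR
  have h1 : (p:ℤ)^(K+1) ∣ Spow p m (K+1) -
      ∑ t ∈ range p, ∑ r ∈ range (p^K), ((r:ℤ)^m + m*(r:ℤ)^(m-1)*(t*(p:ℤ)^K)) := by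
    rw [hsplit, ← Finset.sum_sub_distrib]
    apply Finset.dvd_sum
    intro t ht
    rw [← Finset.sum_sub_distrib]
    apply Finset.dvd_sum
    intro r hr
    have hb := binom_aux (r:ℤ) ((t:ℤ)*(p:ℤ)^K) m hm1
    have hcast : ((t*p^K + r : ℕ) : ℤ) = (r:ℤ) + (t:ℤ)*(p:ℤ)^K := by push_cast; ring
    rw [hcast]
    refine dvd_trans ?_ hb
    have : ((t:ℤ)*(p:ℤ)^K)^2 = (t:ℤ)^2 * ((p:ℤ)^K)^2 := by ring
    rw [this]
    refine dvd_mul_of_dvd_right ?_ _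
    rw [← pow_mul]
    exact pow_dvd_pow _ (by omega)
  have h2 : ∑ t ∈ range p, ∑ r ∈ range (p^K), ((r:ℤ)^m + m*(r:ℤ)^(m-1)*(t*(p:ℤ)^K))
      = p * Spow p m K + m * (p:ℤ)^K * G * R := by
    rw [Finset.sum_congr rfl (fun t _ => Finset.sum_add_distrib)]
    rw [Finset.sum_add_distrib]
    congr 1
    · rw [Finset.sum_const, Finset.card_range, ← Spow]
      simp [nsmul_eq_mul]
    · simp only [hG, hR, Finset.sum_mul, Finset.mul_sum]
      rw [Finset.sum_comm]
      apply Finset.sum_congr rfl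
      intro t _
      apply Finset.sum_congr rfl
      intro r _
      ring
  have h3 : (p:ℤ) ∣ m * G := by
    rcases eq_or_ne p 2 with rfl | hodd
    · exact dvd_mul_of_dvd_left (by exact_mod_cast hm) G
    · have hpd2G : (p:ℤ) ∣ 2 * G := by
        have h0 : (p:ℕ) ∣ (∑ i ∈ range p, i) * 2 := by
          rw [Finset.sum_range_id_mul_two]; exact dvd_mul_right _ _
        have h0' := Int.natCast_dvd_natCast.mpr h0
        push_cast at h0'
        convert h0' using 1
        rw [hG]; push_cast; ring
      have hcop : IsCoprime (p:ℤ) 2 := by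
        rw [Int.isCoprime_iff_gcd_eq_one]
        have : Nat.Coprime p 2 := (Nat.coprime_primes hp Nat.prime_two).mpr hodd
        simpa [Int.gcd] using this
      exact dvd_mul_of_dvd_right (hcop.dvd_of_dvd_mul_left hpd2G) m
  have h4 : (p:ℤ)^(K+1) ∣ m * (p:ℤ)^K * G * R := by
    have : (m : ℤ) * (p:ℤ)^K * G * R = (p:ℤ)^K * ((m * G) * R) := by ring
    rw [this, pow_succ]
    exact mul_dvd_mul_left _ (h3.mul_right R)
  calc (p:ℤ)^(K+1) ∣ (Spow p m (K+1) -
      ∑ t ∈ range p, ∑ r ∈ range (p^K), ((r:ℤ)^m + m*(r:ℤ)^(m-1)*(t*(p:ℤ)^K)))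
      + (m * (p:ℤ)^K * G * R) := dvd_add h1 h4
    _ = Spow p m (K+1) - p * Spow p m K := by rw [h2]; ring

lemma sum_range_zmod_pow (p m : ℕ) [NeZero p] :
    ∑ k ∈ range p, (k : ZMod p)^m = ∑ x : ZMod p, x^m :=
  Finset.sum_nbij' (fun k => ((k:ℕ) : ZMod p)) (fun x : ZMod p => x.val)
    (fun a _ => Finset.mem_univ _)
    (fun a _ => Finset.mem_range.mpr (ZMod.val_lt a))
    (fun a ha => ZMod.val_cast_of_lt (Finset.mem_range.mp ha))
    (fun a _ => by simp)
    (fun a _ => rfl)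

lemma zmod_sum_pow_eq_units (p m : ℕ) [Fact p.Prime] (hm1 : 1 ≤ m) :
    ∑ x : ZMod p, x^m = ∑ x : (ZMod p)ˣ, ((x : ZMod p))^m := by
  classical
  let φ : (ZMod p)ˣ ↪ ZMod p := ⟨fun x ↦ x, fun _ _ h => Units.ext h⟩
  have hφ : Finset.univ.map φ = Finset.univ \ {0} := by
    ext x
    simp only [Finset.mem_map, Finset.mem_univ, Function.Embedding.coeFn_mk, true_and,
      Finset.mem_sdiff, Finset.mem_singleton, φ]
    exact isUnit_iff_ne_zero
  rw [← Finset.sum_sdiff (Finset.subset_univ ({0} : Finset (ZMod p))), Finset.sum_singleton,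
    zero_pow (by omega : m ≠ 0), add_zero, ← hφ, Finset.sum_map]
  rfl

lemma base1 (p m : ℕ) (hp : p.Prime) (hm1 : 1 ≤ m) (hd : (p-1) ∣ m) :
    ¬ (p:ℤ) ∣ Spow p m 1 := by
  haveI := Fact.mk hp
  intro h
  rw [← ZMod.intCast_zmod_eq_zero_iff_dvd] at h
  have h1 : ((Spow p m 1 : ℤ) : ZMod p) = ∑ k ∈ range p, (k : ZMod p)^m := by
    rw [Spow, pow_one]; push_cast; rfl
  classical
  have h4 := FiniteField.sum_pow_units (ZMod p) m
  rw [ZMod.card p, if_pos hd] at h4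
  have h5 : ∑ x : (ZMod p)ˣ, ((x : ZMod p))^m = -1 := by
    rw [← h4]
  rw [h1, sum_range_zmod_pow, zmod_sum_pow_eq_units p m hm1, h5] at h
  exact one_ne_zero (neg_eq_zero.mp h)

lemma case1_val (p m : ℕ) (hp : p.Prime) (hm : 2 ∣ m) (hm1 : 1 ≤ m) (hd : (p-1) ∣ m) :
    ∀ K, 1 ≤ K → ∃ u : ℤ, Spow p m K = (p:ℤ)^(K-1) * u ∧ ¬ (p:ℤ) ∣ u := by
  intro K
  induction K with
  | zero => omega
  | succ K ih =>
    intro _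
    rcases Nat.lt_or_ge K 1 with h1 | hK
    · have hK0 : K = 0 := by omega
      subst hK0
      exact ⟨Spow p m 1, by simp, base1 p m hp hm1 hd⟩
    · obtain ⟨u, hu, hpu⟩ := ih hK
      obtain ⟨c, hc⟩ := step_lemma p m K hp hm hm1 hK
      obtain ⟨K', rfl⟩ : ∃ K', K = K' + 1 := ⟨K - 1, by omega⟩
      refine ⟨u + p * c, ?_, ?_⟩
      · have h2 : Spow p m (K'+1+1) = p * Spow p m (K'+1) + (p:ℤ)^(K'+1+1) * c := by
          linarith
        rw [h2, hu]
        simp only [Nat.add_sub_cancel]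
        ring
      · intro hdvd
        have h3 := dvd_sub hdvd (dvd_mul_right (p:ℤ) c)
        simp only [add_sub_cancel_right] at h3
        exact hpu h3

lemma exists_c (p m : ℕ) (hp : p.Prime) (hnd : ¬ (p-1) ∣ m) :
    ∃ c : ℕ, ¬ p ∣ c ∧ ¬ (p:ℤ) ∣ ((c:ℤ)^m - 1) := by
  haveI := Fact.mk hp
  obtain ⟨g, hg⟩ := IsCyclic.exists_generator (α := (ZMod p)ˣ)
  have hord : orderOf g = p - 1 := by
    rw [orderOf_eq_card_of_forall_mem_zpowers hg, Nat.card_eq_fintype_card, ZMod.card_units p]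
  have hgm : g ^ m ≠ 1 := fun h => hnd (hord ▸ orderOf_dvd_of_pow_eq_one h)
  refine ⟨(g : ZMod p).val, ?_, ?_⟩
  · intro hdvd
    have h1 : (((g : ZMod p).val : ℕ) : ZMod p) = 0 :=
      (ZMod.natCast_eq_zero_iff _ p).mpr hdvd
    simp only [ZMod.natCast_val, ZMod.cast_id] at h1
    exact g.ne_zero h1
  · intro hdvd
    have h1 : ((((g : ZMod p).val : ℤ)^m - 1 : ℤ) : ZMod p) = 0 :=
      (ZMod.intCast_zmod_eq_zero_iff_dvd _ p).mpr hdvd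
    push_cast at h1
    simp only [ZMod.natCast_val, ZMod.cast_id] at h1
    apply hgm
    ext
    push_cast
    rw [sub_eq_zero] at h1
    exact h1

lemma case2_val (p m : ℕ) (hp : p.Prime) (hm1 : 1 ≤ m) (hnd : ¬ (p-1) ∣ m)
    (K : ℕ) (hK : padicValNat p m ≤ K) :
    (p:ℤ)^(K + padicValNat p m) ∣ Spow p m K := by
  obtain ⟨c, hpc, hpcm⟩ := exists_c p m hp hnd
  set n : ℕ := p^K with hn
  have hn0 : 0 < n := pow_pos hp.pos K
  -- the map k ↦ c*k % n is a bijection of range n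
  have hcop : Nat.Coprime c n := (Nat.Coprime.pow_right K (Nat.coprime_comm.mp
    (hp.coprime_iff_not_dvd.mpr hpc)))
  have hinj : Set.InjOn (fun k => c * k % n) (range n) := by
    intro a ha b hb hab
    simp only [Finset.coe_range, Set.mem_Iio] at ha hb
    have : a % n = b % n := Nat.ModEq.cancel_left_of_coprime
      (by rwa [Nat.coprime_comm] at hcop) hab
    rwa [Nat.mod_eq_of_lt ha, Nat.mod_eq_of_lt hb] at this
  have himg : Finset.image (fun k => c * k % n) (range n) = range n := by
    apply Finset.eq_of_subset_of_card_le
    · intro x hx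
      simp only [Finset.mem_image, Finset.mem_range] at hx ⊢
      obtain ⟨k, _, rfl⟩ := hx
      exact Nat.mod_lt _ hn0
    · rw [Finset.card_image_of_injOn hinj, Finset.card_range]
  have hperm : ∑ k ∈ range n, ((c * k % n : ℕ) : ℤ)^m = Spow p m K := by
    rw [Spow, ← hn]
    conv_rhs => rw [← himg]
    rw [Finset.sum_image
      (fun a ha b hb hab => hinj (by simpa using ha) (by simpa using hb) hab)]
  -- main congruence
  set W : ℤ := ∑ k ∈ range n, ((c * k % n : ℕ) : ℤ)^(m-1) * ((c * k / n : ℕ) : ℤ) with hW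
  have key : ((n:ℤ))^2 ∣ (c:ℤ)^m * Spow p m K - (Spow p m K + m * n * W) := by
    have expand : (c:ℤ)^m * Spow p m K =
        ∑ k ∈ range n, (((c * k % n : ℕ) : ℤ) + ((c * k / n : ℕ) : ℤ) * n)^m := by
      rw [Spow, ← hn, Finset.mul_sum]
      apply Finset.sum_congr rfl
      intro k _
      rw [← mul_pow]
      congr 1
      have h0 : (c * k % n) + (c * k / n) * n = c * k := Nat.mod_add_div' (c*k) n
      exact_mod_cast h0.symm
    rw [expand, ← hperm, hW]
    rw [Finset.mul_sum, ← Finset.sum_add_distrib, ← Finset.sum_sub_distrib]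
    apply Finset.dvd_sum
    intro k _
    have hb := binom_aux ((c * k % n : ℕ) : ℤ) (((c * k / n : ℕ) : ℤ) * n) m hm1
    have h2 : ((n:ℤ))^2 ∣ (((c * k / n : ℕ) : ℤ) * n)^2 := by
      rw [mul_pow]; exact dvd_mul_left _ _
    have h3 := dvd_trans h2 hb
    convert h3 using 1
    push_cast
    ring
  obtain ⟨D, hD⟩ := key
  set e : ℕ := padicValNat p m with he
  have hSplit : ((c:ℤ)^m - 1) * Spow p m K = (m : ℤ) * n * W + (n:ℤ)^2 * D := by
    linarith
  have hdvd1 : (p:ℤ)^(K+e) ∣ (m : ℤ) * n * W := by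
    have hpe : (p:ℤ)^e ∣ (m:ℤ) := by exact_mod_cast Int.natCast_dvd_natCast.mpr pow_padicValNat_dvd
    obtain ⟨m', hm'⟩ := hpe
    rw [hm', hn]
    push_cast
    rw [pow_add]
    calc (p:ℤ)^K * (p:ℤ)^e ∣ ((p:ℤ)^e * m') * (p:ℤ)^K := ⟨m', by ring⟩
      _ ∣ ((p:ℤ)^e * m') * (p:ℤ)^K * W := dvd_mul_right _ _
  have hdvd2 : (p:ℤ)^(K+e) ∣ ((n:ℤ))^2 * D := by
    refine dvd_mul_of_dvd_left ?_ D
    rw [hn]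
    push_cast
    rw [← pow_mul]
    exact pow_dvd_pow _ (by omega)
  have h5 : (p:ℤ)^(K+e) ∣ ((c:ℤ)^m - 1) * Spow p m K := by
    rw [hSplit]; exact dvd_add hdvd1 hdvd2
  have hcop2 : IsCoprime ((p:ℤ)^(K+e)) ((c:ℤ)^m - 1) :=
    IsCoprime.pow_left ((Nat.prime_iff_prime_int.mp hp).coprime_iff_not_dvd.mpr hpcm)
  exact hcop2.dvd_of_dvd_mul_left h5

lemma faulhaber_aux (m : ℕ) (hm1 : 1 ≤ m) :
    ∃ L : ℕ, 0 < L ∧ ∀ n : ℕ, 0 < n → ∃ Kc : ℤ,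
      bernoulli m = (∑ k ∈ range n, (k:ℚ)^m) / n - n * Kc / ((m+1) * L) := by
  classical
  set L : ℕ := ∏ i ∈ range (m+1), (bernoulli i).den with hL
  have hL0 : 0 < L := Finset.prod_pos (fun i _ => (bernoulli i).pos)
  refine ⟨L, hL0, ?_⟩
  set z : ℕ → ℤ := fun i => ((L:ℚ) * bernoulli i).num with hzdef
  have hz : ∀ i ∈ range (m+1), ((z i : ℤ) : ℚ) = (L:ℚ) * bernoulli i := by
    intro i hi
    obtain ⟨t, ht⟩ := Finset.dvd_prod_of_mem (fun i => (bernoulli i).den) hi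
    have hw : (L:ℚ) * bernoulli i = ((t : ℤ) * (bernoulli i).num : ℤ) := by
      rw [hL, ht]
      push_cast
      rw [mul_comm ((bernoulli i).den:ℚ) (t:ℚ), mul_assoc,
        mul_comm ((bernoulli i).den:ℚ) (bernoulli i), Rat.mul_den_eq_num]
    rw [hzdef]
    simp only [hw, Rat.num_intCast]
  intro n hn
  refine ⟨∑ i ∈ range m, z i * ((m+1).choose i : ℤ) * (n:ℤ)^(m-1-i), ?_⟩
  have hm1Q : ((m:ℚ)+1) ≠ 0 := by positivity
  have hnQ : (n:ℚ) ≠ 0 := Nat.cast_ne_zero.mpr hn.ne'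
  have hLQ : (L:ℚ) ≠ 0 := Nat.cast_ne_zero.mpr hL0.ne'
  have star : ((m:ℚ)+1) * L * (∑ k ∈ range n, (k:ℚ)^m) =
      ((m:ℚ)+1) * L * bernoulli m * n
      + (n:ℚ)^2 * ((∑ i ∈ range m, z i * ((m+1).choose i : ℤ) * (n:ℤ)^(m-1-i) : ℤ) : ℚ) := by
    rw [sum_range_pow, Finset.mul_sum, Finset.sum_range_succ]
    have hterm : ∀ i ∈ range (m+1),
        ((m:ℚ)+1) * L * (bernoulli i * ((m+1).choose i) * (n:ℚ)^(m+1-i) / (m+1)) =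
        (L:ℚ) * bernoulli i * ((m+1).choose i) * (n:ℚ)^(m+1-i) := by
      intro i _
      push_cast
      field_simp
    rw [Finset.sum_congr rfl (fun i hi => hterm i (by simp only [Finset.mem_range] at hi ⊢; omega))]
    rw [hterm m (by simp)]
    have hlast : (L:ℚ) * bernoulli m * ((m+1).choose m) * (n:ℚ)^(m+1-m) =
        ((m:ℚ)+1) * L * bernoulli m * n := by
      rw [Nat.choose_succ_self_right, Nat.add_sub_cancel_left, pow_one]
      push_cast
      ring
    rw [hlast, add_comm]
    congr 1
    push_cast
    rw [Finset.mul_sum]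
    apply Finset.sum_congr rfl
    intro i hi
    simp only [Finset.mem_range] at hi
    have he : m + 1 - i = (m - 1 - i) + 2 := by omega
    rw [he, pow_add]
    have := hz i (by simp only [Finset.mem_range]; omega)
    push_cast at this
    rw [this]
    ring
  push_cast at star ⊢
  field_simp
  linear_combination (-1 : ℚ) * star

section glue
variable (p : ℕ) [hfp : Fact p.Prime]

lemma den_val_of_neg (q : ℚ) (h : padicValRat p q < 0) :
    (padicValNat p q.den : ℤ) = - padicValRat p q := by
  by_cases hpd : p ∣ q.den
  · have hnum : padicValInt p q.num = 0 := by
      rw [padicValInt]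
      apply padicValNat.eq_zero_of_not_dvd
      intro hc
      have h1 := Nat.dvd_gcd hc hpd
      rw [q.reduced] at h1
      exact Nat.Prime.one_lt hfp.out |>.ne' (Nat.dvd_one.mp h1)
    rw [padicValRat_def, hnum]
    simp
  · exfalso
    have h0 : padicValNat p q.den = 0 := padicValNat.eq_zero_of_not_dvd hpd
    rw [padicValRat_def, h0] at h
    simp at h
    omega

lemma den_val_of_nonneg (q : ℚ) (h : 0 ≤ padicValRat p q) :
    padicValNat p q.den = 0 := by
  by_cases hpd : p ∣ q.den
  · exfalso
    have hnum : padicValInt p q.num = 0 := by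
      rw [padicValInt]
      apply padicValNat.eq_zero_of_not_dvd
      intro hc
      have h1 := Nat.dvd_gcd hc hpd
      rw [q.reduced] at h1
      exact Nat.Prime.one_lt hfp.out |>.ne' (Nat.dvd_one.mp h1)
    have hden1 : 1 ≤ padicValNat p q.den :=
      one_le_padicValNat_of_dvd q.pos.ne' hpd
    rw [padicValRat_def, hnum] at h
    rw [Nat.cast_zero, zero_sub, le_neg, neg_zero] at h
    omega
  · exact padicValNat.eq_zero_of_not_dvd hpd

lemma spow_pos (m K : ℕ) (hm1 : 1 ≤ m) (hK : 1 ≤ K) (hp2 : 2 ≤ p) :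
    (0:ℤ) < Spow p m K := by
  apply Finset.sum_pos' (fun i _ => pow_nonneg (Int.natCast_nonneg i) m)
  refine ⟨1, Finset.mem_range.mpr ?_, by simp⟩
  exact Nat.one_lt_pow (by omega) (by omega)

end glue

lemma padicValInt_p_pow (p : ℕ) [hfp : Fact p.Prime] (a : ℕ) :
    padicValInt p ((p:ℤ)^a) = a := by
  have h : (p:ℤ)^a = ((p^a : ℕ) : ℤ) := by push_cast; rfl
  rw [h, padicValInt.of_nat, padicValNat.prime_pow]

lemma err_val (p m L : ℕ) [hfp : Fact p.Prime] (hL0 : 0 < L) (N : ℕ) (Kc : ℤ) (hKc : Kc ≠ 0) :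
    (N : ℤ) - padicValNat p ((m+1) * L) ≤
      padicValRat p ((p:ℚ)^N * Kc / (((m:ℚ)+1) * L)) := by
  have hp := hfp.out
  have hpQ : (p:ℚ) ≠ 0 := Nat.cast_ne_zero.mpr hp.pos.ne'
  have hden : ((m:ℚ)+1) * L = (((m+1) * L : ℕ) : ℚ) := by push_cast; ring
  have hdenne : (((m+1) * L : ℕ) : ℚ) ≠ 0 := Nat.cast_ne_zero.mpr (by positivity)
  have hnum_ne : (p:ℚ)^N * Kc ≠ 0 :=
    mul_ne_zero (pow_ne_zero N hpQ) (Int.cast_ne_zero.mpr hKc)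
  rw [hden, padicValRat.div hnum_ne hdenne,
    padicValRat.mul (pow_ne_zero N hpQ) (Int.cast_ne_zero.mpr hKc)]
  have h1 : padicValRat p ((p:ℚ)^N) = N := by
    have : (p:ℚ)^N = ((p^N : ℕ) : ℚ) := by push_cast; rfl
    rw [this, padicValRat.of_nat, padicValNat.prime_pow]
  have h2 : (0:ℤ) ≤ padicValRat p ((Kc : ℤ) : ℚ) := by
    rw [padicValRat.of_int]; positivity
  have h3 : padicValRat p (((m+1) * L : ℕ) : ℚ) = padicValNat p ((m+1)*L) := by
    rw [padicValRat.of_nat]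
  rw [h1, h3]
  omega

lemma bernoulli_val_case1 (p m : ℕ) [hfp : Fact p.Prime] (hm : 2 ∣ m) (hm1 : 1 ≤ m)
    (hd : (p-1) ∣ m) : bernoulli m ≠ 0 ∧ padicValRat p (bernoulli m) = -1 := by
  have hp := hfp.out
  obtain ⟨L, hL0, hF⟩ := faulhaber_aux m hm1
  set C : ℕ := padicValNat p ((m+1) * L) with hC
  set N : ℕ := C + 1 with hN
  have hN1 : 1 ≤ N := by omega
  have hpN0 : 0 < p^N := pow_pos hp.pos N
  obtain ⟨Kc, hKc⟩ := hF (p^N) hpN0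
  have hSne : Spow p m N ≠ 0 := (spow_pos p m N hm1 hN1 hp.two_le).ne'
  set s : ℚ := ((Spow p m N : ℤ) : ℚ) / ((p:ℚ)^N) with hs
  have hpQ : (p:ℚ) ≠ 0 := Nat.cast_ne_zero.mpr hp.pos.ne'
  have hB : bernoulli m = s - (p:ℚ)^N * Kc / (((m:ℚ)+1) * L) := by
    rw [hKc, hs, Spow]
    push_cast
    ring_nf
  have hsne : s ≠ 0 := div_ne_zero (Int.cast_ne_zero.mpr hSne) (pow_ne_zero N hpQ)
  have hsval : padicValRat p s = -1 := by
    obtain ⟨u, hu, hpu⟩ := case1_val p m hp hm hm1 hd N hN1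
    have hu0 : u ≠ 0 := fun h0 => hpu (h0 ▸ dvd_zero _)
    rw [hs, padicValRat.div (Int.cast_ne_zero.mpr hSne) (pow_ne_zero N hpQ)]
    have h1 : padicValRat p ((Spow p m N : ℤ) : ℚ) = ((N - 1 : ℕ) : ℤ) := by
      rw [padicValRat.of_int, hu, padicValInt.mul (pow_ne_zero _
        (Int.natCast_ne_zero.mpr hp.pos.ne')) hu0, padicValInt_p_pow,
        padicValInt.eq_zero_of_not_dvd hpu]
      simp
    have h2 : padicValRat p ((p:ℚ)^N) = N := by
      have : (p:ℚ)^N = ((p^N : ℕ) : ℚ) := by push_cast; rfl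
      rw [this, padicValRat.of_nat, padicValNat.prime_pow]
    rw [h1, h2]
    omega
  by_cases hKc0 : Kc = 0
  · rw [hKc0] at hB
    simp only [Int.cast_zero, mul_zero, zero_div, sub_zero] at hB
    rw [hB]
    exact ⟨hsne, hsval⟩
  · have herrval := err_val p m L hL0 N Kc hKc0
    rw [← hC] at herrval
    set err : ℚ := (p:ℚ)^N * Kc / (((m:ℚ)+1) * L) with herr
    have herrne : err ≠ 0 := by
      rw [herr]
      apply div_ne_zero (mul_ne_zero (pow_ne_zero N hpQ) (Int.cast_ne_zero.mpr hKc0))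
      have : ((m:ℚ)+1) * L = (((m+1) * L : ℕ) : ℚ) := by push_cast; ring
      rw [this]
      exact Nat.cast_ne_zero.mpr (by positivity)
    have hvne : padicValRat p s < padicValRat p (-err) := by
      rw [padicValRat.neg, hsval]
      omega
    have hBne : bernoulli m ≠ 0 := by
      rw [hB, sub_eq_add_neg]
      intro h0
      have : s = err := by linarith [neg_eq_of_add_eq_zero_left h0]
      rw [padicValRat.neg] at hvne
      rw [this] at hsval
      omega
    refine ⟨hBne, ?_⟩
    rw [hB, sub_eq_add_neg] at hBne ⊢
    rw [padicValRat.add_eq_of_lt hBne hsne (neg_ne_zero.mpr herrne) hvne, hsval]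

lemma bernoulli_val_case2 (p m : ℕ) [hfp : Fact p.Prime] (hm1 : 1 ≤ m)
    (hnd : ¬ (p-1) ∣ m) :
    bernoulli m = 0 ∨ (padicValNat p m : ℤ) ≤ padicValRat p (bernoulli m) := by
  by_cases hB0 : bernoulli m = 0
  · exact Or.inl hB0
  right
  have hp := hfp.out
  obtain ⟨L, hL0, hF⟩ := faulhaber_aux m hm1
  set e : ℕ := padicValNat p m with he
  set C : ℕ := padicValNat p ((m+1) * L) with hC
  set N : ℕ := C + e + 1 with hN
  have hN1 : 1 ≤ N := by omega
  have hpN0 : 0 < p^N := pow_pos hp.pos N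
  obtain ⟨Kc, hKc⟩ := hF (p^N) hpN0
  have hSne : Spow p m N ≠ 0 := (spow_pos p m N hm1 hN1 hp.two_le).ne'
  set s : ℚ := ((Spow p m N : ℤ) : ℚ) / ((p:ℚ)^N) with hs
  have hpQ : (p:ℚ) ≠ 0 := Nat.cast_ne_zero.mpr hp.pos.ne'
  have hB : bernoulli m = s - (p:ℚ)^N * Kc / (((m:ℚ)+1) * L) := by
    rw [hKc, hs, Spow]
    push_cast
    ring_nf
  have hsne : s ≠ 0 := div_ne_zero (Int.cast_ne_zero.mpr hSne) (pow_ne_zero N hpQ)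
  have hsval : (e:ℤ) ≤ padicValRat p s := by
    have hdvd := case2_val p m hp hm1 hnd N (by omega)
    have hval : (N + e : ℕ) ≤ padicValInt p (Spow p m N) := by
      rcases (padicValInt_dvd_iff (N+e) (Spow p m N)).mp hdvd with h | h
      · exact absurd h hSne
      · exact h
    have h2 : padicValRat p ((p:ℚ)^N) = N := by
      have : (p:ℚ)^N = ((p^N : ℕ) : ℚ) := by push_cast; rfl
      rw [this, padicValRat.of_nat, padicValNat.prime_pow]
    rw [hs, padicValRat.div (Int.cast_ne_zero.mpr hSne) (pow_ne_zero N hpQ), h2,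
      padicValRat.of_int]
    omega
  by_cases hKc0 : Kc = 0
  · rw [hKc0] at hB
    simp only [Int.cast_zero, mul_zero, zero_div, sub_zero] at hB
    rw [hB]
    exact hsval
  · have herrval := err_val p m L hL0 N Kc hKc0
    rw [← hC] at herrval
    set err : ℚ := (p:ℚ)^N * Kc / (((m:ℚ)+1) * L) with herr
    have hBne : bernoulli m ≠ 0 := hB0
    rw [hB, sub_eq_add_neg] at hBne
    have hmin := padicValRat.min_le_padicValRat_add (p := p) hBne
    rw [padicValRat.neg] at hmin
    rw [hB, sub_eq_add_neg]
    have : (e:ℤ) ≤ min (padicValRat p s) (padicValRat p err) := by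
      apply le_min hsval
      omega
    calc (e:ℤ) ≤ _ := this
      _ ≤ _ := by rw [← padicValRat.neg (q := err)] at hmin ⊢; exact hmin

/-- For every prime `p` and positive integer `n`: the `p`-adic valuation of the denominator
of `ζ(1 − 2n) = −B_{2n}/(2n)` is `0` if `(p − 1) ∤ 2n`, and is `1 + ν_p(2n)` if
`(p − 1) ∣ 2n`. -/
theorem stmt_15 (p n : ℕ) (hp : p.Prime) (hn : 0 < n) :
    (¬ (p - 1) ∣ 2 * n →
      padicValNat p ((-(bernoulli (2 * n)) / ((2 * n : ℕ) : ℚ)).den) = 0) ∧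
    ((p - 1) ∣ 2 * n →
      padicValNat p ((-(bernoulli (2 * n)) / ((2 * n : ℕ) : ℚ)).den)
        = 1 + padicValNat p (2 * n)) := by
  haveI := Fact.mk hp
  have hm1 : 1 ≤ 2 * n := by omega
  have hm2 : 2 ∣ 2 * n := ⟨n, rfl⟩
  have h2n0 : ((2 * n : ℕ) : ℚ) ≠ 0 := Nat.cast_ne_zero.mpr (by omega)
  have hvm : padicValRat p ((2 * n : ℕ) : ℚ) = padicValNat p (2 * n) :=
    padicValRat.of_nat
  constructor
  · intro hnd
    by_cases hB0 : bernoulli (2*n) = 0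
    · rw [hB0]
      simp
    · have hval := (bernoulli_val_case2 p (2*n) hm1 hnd).resolve_left hB0
      apply den_val_of_nonneg
      rw [padicValRat.div (neg_ne_zero.mpr hB0) h2n0, padicValRat.neg, hvm]
      omega
  · intro hd
    obtain ⟨hBne, hval⟩ := bernoulli_val_case1 p (2*n) hm2 hm1 hd
    have hq : padicValRat p (-(bernoulli (2*n)) / ((2*n:ℕ):ℚ))
        = -1 - padicValNat p (2*n) := by
      rw [padicValRat.div (neg_ne_zero.mpr hBne) h2n0, padicValRat.neg, hval, hvm]
    have hneg : padicValRat p (-(bernoulli (2*n)) / ((2*n:ℕ):ℚ)) < 0 := by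
      rw [hq]; omega
    have hden := den_val_of_neg p _ hneg
    rw [hq] at hden
    omega
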